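/- For every n, k₁, k₂ with 2 ≤ k₁, k₂ ≤ n, there exists an (n, k₁, k₂, k₁+k₂+1) sumset linear injector of size m = n(k₁+k₂): a family of (k₁+k₂+1) × n matrices A_1, ..., A_m over F_2 such that for every pair of subspaces U, V ⊆ F_2^n of dimensions k₁ and k₂ respectively with dim(U ∩ V) ≤ 1, there exists i ∈ [m] with ker(A_i) ∩ (U + V) = {0}. -/

import Mathlib

open Module Finset

namespace Stmt15Aux

open scoped Classical
set_option maxHeartbeats 1000000

/-- Count of matrices killing a fixed nonzero vector. -/
lemma card_kill (d n : ℕ) (x : Fin n → ZMod 2) (hx : x ≠ 0) :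
    (Finset.univ.filter fun M : Matrix (Fin d) (Fin n) (ZMod 2) => M.mulVec x = 0).card
      ≤ (2 ^ (n - 1)) ^ d := by
  classical
  set φ : (Fin n → ZMod 2) →ₗ[ZMod 2] ZMod 2 :=
    { toFun := fun r => dotProduct r x
      map_add' := fun a b => add_dotProduct a b x
      map_smul' := fun c a => smul_dotProduct c a x } with hφ
  -- the set of rows killing x has size ≤ 2^(n-1)
  have hkerlt : LinearMap.ker φ < ⊤ := by
    rw [lt_top_iff_ne_top]
    intro htop
    obtain ⟨j, hj⟩ := Function.ne_iff.mp hx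
    have h1 : Pi.single j (1 : ZMod 2) ∈ LinearMap.ker φ := htop ▸ Submodule.mem_top
    rw [LinearMap.mem_ker] at h1
    have : dotProduct (Pi.single j (1 : ZMod 2)) x = x j := by
      simp [dotProduct, Pi.single_apply]
    simp only [hφ, LinearMap.coe_mk, AddHom.coe_mk] at h1
    rw [this] at h1
    exact hj h1
  have hfr : finrank (ZMod 2) (LinearMap.ker φ) ≤ n - 1 := by
    have := Submodule.finrank_lt (K := ZMod 2) (V := Fin n → ZMod 2) hkerlt.ne
    rw [Module.finrank_fin_fun] at this
    omega
  have hcard : Fintype.card (LinearMap.ker φ) ≤ 2 ^ (n - 1) := by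
    rw [card_eq_pow_finrank (K := ZMod 2) (V := LinearMap.ker φ)]
    have : Fintype.card (ZMod 2) = 2 := by simp
    rw [this]
    exact Nat.pow_le_pow_right (by norm_num) hfr
  -- now count matrices
  rw [← Fintype.card_subtype]
  have e : {M : Matrix (Fin d) (Fin n) (ZMod 2) // M.mulVec x = 0}
      ≃ (Fin d → LinearMap.ker φ) :=
    { toFun := fun M i => ⟨M.1 i, LinearMap.mem_ker.mpr (congrFun M.2 i)⟩
      invFun := fun f => ⟨Matrix.of fun i j => (f i : Fin n → ZMod 2) j, by
        funext i
        exact LinearMap.mem_ker.mp (f i).2⟩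
      left_inv := fun M => rfl
      right_inv := fun f => rfl }
  rw [Fintype.card_congr e, Fintype.card_fun]
  calc Fintype.card (LinearMap.ker φ) ^ Fintype.card (Fin d)
      ≤ (2 ^ (n - 1)) ^ Fintype.card (Fin d) := Nat.pow_le_pow_left hcard _
    _ = (2 ^ (n - 1)) ^ d := by rw [Fintype.card_fin]

/-- Count of matrices whose kernel meets a low-dimensional subspace nontrivially. -/
lemma card_bad1 (d n k : ℕ) (W : Submodule (ZMod 2) (Fin n → ZMod 2))
    (hW : finrank (ZMod 2) W ≤ k) :
    (@Finset.filter (Matrix (Fin d) (Fin n) (ZMod 2))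
        (fun M => ∃ x ∈ W, x ≠ 0 ∧ M.mulVec x = 0)
        (fun _ => Classical.propDecidable _) Finset.univ).card
      ≤ (2 ^ k - 1) * (2 ^ (n - 1)) ^ d := by
  classical
  set T : Finset (Fin n → ZMod 2) := (@Finset.filter _ (fun x => x ∈ W) (fun _ => Classical.propDecidable _) Finset.univ).erase 0 with hT
  have hsub : (@Finset.filter (Matrix (Fin d) (Fin n) (ZMod 2))
        (fun M => ∃ x ∈ W, x ≠ 0 ∧ M.mulVec x = 0)
        (fun _ => Classical.propDecidable _) Finset.univ)
      ⊆ T.biUnion (fun x => Finset.univ.filter fun M => M.mulVec x = 0) := by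
    intro M hM
    simp only [Finset.mem_filter, Finset.mem_univ, true_and] at hM
    obtain ⟨x, hxW, hx0, hMx⟩ := hM
    rw [Finset.mem_biUnion]
    refine ⟨x, ?_, by simp [hMx]⟩
    simp [hT, hx0, hxW]
  have hTcard : T.card ≤ 2 ^ k - 1 := by
    have h0 : (0 : Fin n → ZMod 2) ∈ (@Finset.filter _ (fun x => x ∈ W) (fun _ => Classical.propDecidable _) Finset.univ) := by
      simp [W.zero_mem]
    rw [hT, Finset.card_erase_of_mem h0]
    have hWc : (@Finset.filter _ (fun x : Fin n → ZMod 2 => x ∈ W) (fun _ => Classical.propDecidable _) Finset.univ).card ≤ 2 ^ k := by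
      rw [← Fintype.card_subtype]
      have : Fintype.card {x : Fin n → ZMod 2 // x ∈ W} = Fintype.card W := rfl
      rw [this, card_eq_pow_finrank (K := ZMod 2) (V := W)]
      have h2 : Fintype.card (ZMod 2) = 2 := by simp
      rw [h2]
      exact Nat.pow_le_pow_right (by norm_num) hW
    omega
  refine le_trans (Finset.card_le_card hsub) (le_trans Finset.card_biUnion_le (le_trans (Finset.sum_le_sum fun x hxT => card_kill d n x (Finset.mem_erase.mp hxT).1) ?_))
  rw [Finset.sum_const, smul_eq_mul]
  exact Nat.mul_le_mul_right _ hTcard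
lemma exists_span_tuple {n k : ℕ} (U : Submodule (ZMod 2) (Fin n → ZMod 2))
    (hU : finrank (ZMod 2) U = k) :
    ∃ u : Fin k → (Fin n → ZMod 2), Submodule.span (ZMod 2) (Set.range u) = U := by
  classical
  let b : Basis (Fin k) (ZMod 2) U := Module.finBasisOfFinrankEq (ZMod 2) U hU
  refine ⟨fun i => (b i : Fin n → ZMod 2), ?_⟩
  have hr : Set.range (fun i => (b i : Fin n → ZMod 2))
      = U.subtype '' Set.range b := by
    rw [← Set.range_comp]; rfl
  rw [hr, Submodule.span_image, b.span_eq, Submodule.map_subtype_top]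

/-- The key existence lemma, stated for spanning tuples. -/
lemma exists_good (n k1 k2 : ℕ) (h1 : 2 ≤ k1) (h1n : k1 ≤ n) (h2 : 2 ≤ k2) :
    ∃ A : Fin (n * (k1 + k2)) → Matrix (Fin (k1 + k2 + 1)) (Fin n) (ZMod 2),
      ∀ u : Fin k1 → (Fin n → ZMod 2), ∀ v : Fin k2 → (Fin n → ZMod 2),
        ∃ i, ∀ x ∈ Submodule.span (ZMod 2) (Set.range u) ⊔ Submodule.span (ZMod 2) (Set.range v),
          (A i).mulVec x = 0 → x = 0 := by
  classical
  set k := k1 + k2 with hk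
  set d := k1 + k2 + 1 with hd
  set m := n * (k1 + k2) with hm
  let Pair := (Fin k1 → (Fin n → ZMod 2)) × (Fin k2 → (Fin n → ZMod 2))
  let Wp : Pair → Submodule (ZMod 2) (Fin n → ZMod 2) :=
    fun p => Submodule.span (ZMod 2) (Set.range p.1) ⊔ Submodule.span (ZMod 2) (Set.range p.2)
  let Bad1 : Pair → Finset (Matrix (Fin d) (Fin n) (ZMod 2)) :=
    fun p => @Finset.filter _ (fun M => ∃ x ∈ Wp p, x ≠ 0 ∧ M.mulVec x = 0)
      (fun _ => Classical.propDecidable _) Finset.univ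
  let BadP : Pair → Finset (Fin m → Matrix (Fin d) (Fin n) (ZMod 2)) :=
    fun p => Fintype.piFinset (fun _ : Fin m => Bad1 p)
  -- cardinality of each `BadP p`
  have hWp : ∀ p : Pair, finrank (ZMod 2) (Wp p) ≤ k := by
    intro p
    refine le_trans (Submodule.finrank_add_le_finrank_add_finrank _ _) ?_
    have hu := finrank_range_le_card (R := ZMod 2) p.1
    have hv := finrank_range_le_card (R := ZMod 2) p.2
    simp only [Fintype.card_fin] at hu hv
    exact add_le_add hu hv
  have hBadP : ∀ p : Pair, (BadP p).card ≤ ((2 ^ k - 1) * (2 ^ (n - 1)) ^ d) ^ m := by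
    intro p
    have hcardeq : (BadP p).card = (Bad1 p).card ^ m := by
      rw [Fintype.card_piFinset]
      simp
    rw [hcardeq]
    exact Nat.pow_le_pow_left (card_bad1 d n k (Wp p) (hWp p)) m
  have hm0 : m ≠ 0 := by
    have hn : 0 < n := by omega
    have hkk : 0 < k1 + k2 := by omega
    have := Nat.mul_pos hn hkk
    omega
  -- there is a family avoiding all bad sets
  have hlt : (Finset.univ.biUnion BadP).card
      < Fintype.card (Fin m → Matrix (Fin d) (Fin n) (ZMod 2)) := by
    have hb : (Finset.univ.biUnion BadP).card
        ≤ Fintype.card Pair * ((2 ^ k - 1) * (2 ^ (n - 1)) ^ d) ^ m := by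
      refine le_trans Finset.card_biUnion_le ?_
      refine le_trans (Finset.sum_le_sum fun p _ => hBadP p) ?_
      rw [Finset.sum_const, smul_eq_mul, Finset.card_univ]
    have hPair : Fintype.card Pair = 2 ^ m := by
      show Fintype.card ((Fin k1 → (Fin n → ZMod 2)) × (Fin k2 → (Fin n → ZMod 2))) = 2 ^ m
      simp only [Fintype.card_prod, Fintype.card_fun, ZMod.card, Fintype.card_fin]
      rw [← pow_mul, ← pow_mul, ← pow_add, ← Nat.mul_add, hm]
    have htotal : Fintype.card (Fin m → Matrix (Fin d) (Fin n) (ZMod 2)) = (2 ^ (n * d)) ^ m := by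
      rw [Fintype.card_fun, Fintype.card_fin]
      congr 1
      rw [← Fintype.card_congr (Matrix.of (m := Fin d) (n := Fin n) (α := ZMod 2))]
      simp only [Fintype.card_fun, ZMod.card, Fintype.card_fin]
      rw [← pow_mul, Nat.mul_comm]
    rw [htotal]
    refine lt_of_le_of_lt hb ?_
    rw [hPair, ← mul_pow]
    refine Nat.pow_lt_pow_left ?_ hm0
    -- base inequality
    have h2k : (1 : ℕ) ≤ 2 ^ k := Nat.one_le_two_pow
    have hdk : (2 : ℕ) ^ d = 2 * 2 ^ k := by
      rw [hd, hk, pow_succ, Nat.mul_comm]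
    have hstep : 2 * (2 ^ k - 1) < 2 ^ d := by omega
    have hX : 0 < ((2 : ℕ) ^ (n - 1)) ^ d := by positivity
    calc 2 * ((2 ^ k - 1) * (2 ^ (n - 1)) ^ d)
        = (2 * (2 ^ k - 1)) * (2 ^ (n - 1)) ^ d := by ring
      _ < 2 ^ d * (2 ^ (n - 1)) ^ d := mul_lt_mul_of_pos_right hstep hX
      _ = 2 ^ (n * d) := by
          rw [← pow_mul, ← pow_add]
          congr 1
          have hn1 : n - 1 + 1 = n := by omega
          calc d + (n - 1) * d = (n - 1 + 1) * d := by ring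
            _ = n * d := by rw [hn1]
  -- extract a good family
  have hA : ∃ A : Fin m → Matrix (Fin d) (Fin n) (ZMod 2), A ∉ Finset.univ.biUnion BadP := by
    by_contra hcon
    push_neg at hcon
    have hsub : (Finset.univ : Finset (Fin m → Matrix (Fin d) (Fin n) (ZMod 2)))
        ⊆ Finset.univ.biUnion BadP := fun A _ => hcon A
    have := Finset.card_le_card hsub
    rw [Finset.card_univ] at this
    omega
  obtain ⟨A, hAgood⟩ := hA
  refine ⟨A, fun u v => ?_⟩
  have hnotbad : A ∉ BadP (u, v) := by
    intro hbad
    exact hAgood (Finset.mem_biUnion.mpr ⟨(u, v), Finset.mem_univ _, hbad⟩)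
  have hnot : ¬ ∀ i, ∃ x ∈ Wp (u, v), x ≠ 0 ∧ (A i).mulVec x = 0 := by
    intro hall
    refine hnotbad (Fintype.mem_piFinset.mpr fun i => ?_)
    simp only [Bad1, Finset.mem_filter, Finset.mem_univ, true_and]
    exact hall i
  push_neg at hnot
  obtain ⟨i, hi⟩ := hnot
  refine ⟨i, fun x hx hx0 => ?_⟩
  by_contra hxne
  exact hi x hx hxne hx0

end Stmt15Aux

open Module in
/-- Existence of sumset linear injectors: for all `n, k₁, k₂` with `2 ≤ k₁, k₂ ≤ n` there
is a family of `m = n(k₁+k₂)` matrices of size `(k₁+k₂+1) × n` over `F_2` such that for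
every pair of subspaces `U, V ⊆ F_2^n` of dimensions `k₁`, `k₂` with `dim(U ∩ V) ≤ 1`,
some matrix in the family has kernel intersecting `U + V` trivially. -/
theorem stmt_15 (n k1 k2 : ℕ) (h1 : 2 ≤ k1) (h1n : k1 ≤ n) (h2 : 2 ≤ k2) (h2n : k2 ≤ n) :
    ∃ A : Fin (n * (k1 + k2)) → Matrix (Fin (k1 + k2 + 1)) (Fin n) (ZMod 2),
      ∀ U V : Submodule (ZMod 2) (Fin n → ZMod 2),
        finrank (ZMod 2) U = k1 → finrank (ZMod 2) V = k2 →
        finrank (ZMod 2) ↥(U ⊓ V) ≤ 1 →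
        ∃ i, ∀ x ∈ U ⊔ V, (A i).mulVec x = 0 → x = 0 := by
  obtain ⟨A, hA⟩ := Stmt15Aux.exists_good n k1 k2 h1 h1n h2
  refine ⟨A, fun U V hU hV _ => ?_⟩
  obtain ⟨u, hu⟩ := Stmt15Aux.exists_span_tuple U hU
  obtain ⟨v, hv⟩ := Stmt15Aux.exists_span_tuple V hV
  obtain ⟨i, hi⟩ := hA u v
  rw [hu, hv] at hi
  exact ⟨i, hi⟩
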